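/- Suppose char(F) = 2 and q is non-degenerate with Witt index n ≥ 2 and non-degenerate polarization f_q (i.e., d'₀ = dim Rad(f_q) = 0, so N = 2n + 2m for some m ≥ 0 and V is an f_q-orthogonal direct sum V = V₁ ⊕ ⋯ ⊕ Vₙ ⊕ V₀ with each Vᵢ a hyperbolic plane for q and V₀ anisotropic of dimension 2m). Then for every integer k with 1 ≤ k ≤ n, the Grassmann image G_k(q) coincides with the symplectic Grassmann image S_k(f_q). -/

import Mathlib

noncomputable section

namespace PolarGrass

open Module

variable (F : Type*) [Field F] (V : Type*) [AddCommGroup V] [Module F V]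

/-- A subspace `W` is totally singular for the pairing `B` if `B` vanishes identically on it. -/
def TotSingB (B : V → V → F) (W : Submodule F V) : Prop :=
  ∀ x ∈ W, ∀ y ∈ W, B x y = 0

/-- A subspace `W` is totally singular for the quadratic form `q` if `q` vanishes on it. -/
def TotSingQ (q : QuadraticForm F V) (W : Submodule F V) : Prop :=
  ∀ x ∈ W, q x = 0

/-- The polarization of a quadratic form, as a bare pairing. -/
def polarF (q : QuadraticForm F V) : V → V → F :=
  fun x y => QuadraticMap.polar (⇑q) x y

/-- The subspace of the `k`-th exterior power of `V` spanned by the pure wedges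
`v₁ ∧ ⋯ ∧ v_k` where `v₁, …, v_k` is a basis of a `k`-dimensional subspace satisfying `P`,
all of whose vectors lie in `U`. -/
def grassmannIn (P : Submodule F V → Prop) (U : Submodule F V) (k : ℕ) :
    Submodule F (ExteriorAlgebra F V) :=
  Submodule.span F {x | ∃ v : Fin k → V, (∀ t, v t ∈ U) ∧ LinearIndependent F v ∧
    P (Submodule.span F (Set.range v)) ∧ x = ExteriorAlgebra.ιMulti F k v}

/-- The Grassmann image: the subspace of the `k`-th exterior power of `V` spanned by the
pure wedges of bases of `k`-dimensional subspaces of `V` satisfying `P`. -/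
def grassmann (P : Submodule F V → Prop) (k : ℕ) : Submodule F (ExteriorAlgebra F V) :=
  grassmannIn F V P ⊤ k

/-- `B` is a `σ`-Hermitian form. -/
def IsHermitianForm (σ : F ≃+* F) (B : V → V → F) : Prop :=
  (∀ x y z : V, B (x + y) z = B x z + B y z) ∧
  (∀ x y z : V, B x (y + z) = B x y + B x z) ∧
  (∀ (a b : F) (x y : V), B (a • x) (b • y) = σ a * b * B x y) ∧
  (∀ x y : V, B y x = σ (B x y))

/-- `B` is an alternating bilinear form. -/
def IsAlternatingForm (B : V → V → F) : Prop :=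
  (∀ x y z : V, B (x + y) z = B x z + B y z) ∧
  (∀ x y z : V, B x (y + z) = B x y + B x z) ∧
  (∀ (a : F) (x y : V), B (a • x) y = a * B x y) ∧
  (∀ (a : F) (x y : V), B x (a • y) = a * B x y) ∧
  (∀ x : V, B x x = 0)

/-- `V` is the orthogonal (w.r.t. the pairing `B`) direct sum of the subspaces
`W 0, …, W (n-1), W₀, R`, where each `W i` is a hyperbolic plane (spanned by two singular
vectors pairing to `1`, singularity being measured by `sv`), `W₀` is anisotropic of
dimension `d₀` (it contains no nonzero singular vector) and `R` is the radical
(given as the set `RadSet`) and has dimension `d`. -/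
def IsWittDecomp (B : V → V → F) (sv : V → Prop) (RadSet : Set V) (n d₀ d : ℕ)
    (W : Fin n → Submodule F V) (W₀ R : Submodule F V) : Prop :=
  DirectSum.IsInternal (Sum.elim W ![W₀, R]) ∧
  (∀ j j' : Fin n ⊕ Fin 2, j ≠ j' →
    ∀ x ∈ Sum.elim W ![W₀, R] j, ∀ y ∈ Sum.elim W ![W₀, R] j', B x y = 0) ∧
  (∀ i : Fin n, ∃ e f : V, W i = Submodule.span F {e, f} ∧ sv e ∧ sv f ∧ B e f = 1) ∧
  (∀ v ∈ W₀, v ≠ 0 → ¬ sv v) ∧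
  Module.finrank F W₀ = d₀ ∧
  (R : Set V) = RadSet ∧
  Module.finrank F R = d

/-- There is a Witt decomposition of `V` as above: `B` has reduced Witt index `n`,
anisotropic defect `d₀` and singular defect `d`. -/
def HasWittDecomp (B : V → V → F) (sv : V → Prop) (RadSet : Set V) (n d₀ d : ℕ) : Prop :=
  ∃ (W : Fin n → Submodule F V) (W₀ R : Submodule F V),
    IsWittDecomp F V B sv RadSet n d₀ d W W₀ R

/-- The radical (as a set) of a sesquilinear/bilinear pairing. -/
def radSetB (B : V → V → F) : Set V := {v | ∀ w, B v w = 0}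

/-- The radical (as a set) of a quadratic form. -/
def radSetQ (q : QuadraticForm F V) : Set V :=
  {v | q v = 0 ∧ ∀ w, polarF F V q v w = 0}

/-- The image of `⋀^i U` inside the exterior algebra of `V`: the span of the pure wedges of
`i`-tuples of vectors of `U`. -/
def extPowOf (U : Submodule F V) (i : ℕ) : Submodule F (ExteriorAlgebra F V) :=
  Submodule.span F {x | ∃ v : Fin i → V, (∀ t, v t ∈ U) ∧ x = ExteriorAlgebra.ιMulti F i v}

/-- `Ḡ_j`: for `j ≥ 1` the span of the pure wedges of bases of `j`-dimensional subspaces of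
`U` satisfying `P`; for `j = 0` the scalars `F ⊆ ⋀^0 V`. -/
def gbar (P : Submodule F V → Prop) (U : Submodule F V) : ℕ → Submodule F (ExteriorAlgebra F V)
  | 0 => 1
  | (j + 1) => grassmannIn F V P U (j + 1)

end PolarGrass

section PolarGrassAux

open Module QuadraticMap Submodule

variable {F : Type*} [Field F] {V : Type*} [AddCommGroup V] [Module F V]
variable (q : QuadraticForm F V)

lemma pg_bsymm (x y : V) : polarBilin q x y = polarBilin q y x := by
  simp only [polarBilin_apply_apply]
  exact polar_comm _ x y

lemma pg_qadd (x y : V) : q (x + y) = q x + q y + polarBilin q x y := by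
  rw [polarBilin_apply_apply]
  unfold QuadraticMap.polar
  ring

lemma pg_qsmul (a : F) (x : V) : q (a • x) = a * a * q x := by
  rw [_root_.QuadraticMap.map_smul q a x, smul_eq_mul]

lemma pg_two (h2 : (2 : F) = 0) (a : F) : a + a = 0 := by
  have : a + a = (2 : F) * a := (two_mul _).symm
  rw [this, h2, zero_mul]

lemma pg_bself (h2 : (2 : F) = 0) (x : V) : polarBilin q x x = 0 := by
  have h := pg_qadd q x x
  have hxx : x + x = (2 : F) • x := (two_smul F x).symm
  rw [hxx, h2, zero_smul, QuadraticMap.map_zero] at h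
  have hq : q x + q x = 0 := pg_two h2 _
  linear_combination -h - hq

/-- expansion of the polar form in the left slot -/
lemma pg_expandL (x y z : V) (a : F) :
    polarBilin q (x + a • y) z = polarBilin q x z + a * polarBilin q y z := by
  simp [map_add, LinearMap.map_smul, LinearMap.add_apply, LinearMap.smul_apply, smul_eq_mul]

lemma pg_expandR (x y z : V) (a : F) :
    polarBilin q x (y + a • z) = polarBilin q x y + a * polarBilin q x z := by
  simp [map_add, LinearMap.map_smul, LinearMap.add_apply, LinearMap.smul_apply, smul_eq_mul]

lemma pg_span_perp {y : V} {s : Set V} (h : ∀ x ∈ s, polarBilin q y x = 0) :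
    ∀ x ∈ Submodule.span F s, polarBilin q y x = 0 := by
  intro x hx
  have hle : Submodule.span F s ≤ LinearMap.ker (polarBilin q y) :=
    Submodule.span_le.mpr (fun z hz => h z hz)
  exact hle hx

lemma pg_span_iso {s : Set V} (h : ∀ x ∈ s, ∀ y ∈ s, polarBilin q x y = 0) :
    ∀ x ∈ Submodule.span F s, ∀ y ∈ Submodule.span F s, polarBilin q x y = 0 := by
  intro x hx y hy
  have h1 : ∀ z ∈ s, polarBilin q y z = 0 := by
    intro z hz
    rw [pg_bsymm]
    exact pg_span_perp q (h z hz) y hy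
  rw [pg_bsymm]
  exact pg_span_perp q h1 x hx

lemma pg_sing_iso {S : Submodule F V} (hq : ∀ x ∈ S, q x = 0) :
    ∀ x ∈ S, ∀ y ∈ S, polarBilin q x y = 0 := by
  intro x hx y hy
  have h := pg_qadd q x y
  rw [hq _ (add_mem hx hy), hq _ hx, hq _ hy] at h
  linear_combination -h

lemma pg_span_sing (h2 : (2 : F) = 0) {s : Set V} (hq : ∀ x ∈ s, q x = 0)
    (hb : ∀ x ∈ s, ∀ y ∈ s, polarBilin q x y = 0) :
    ∀ x ∈ Submodule.span F s, q x = 0 := by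
  intro x hx
  induction hx using Submodule.span_induction with
  | mem x hx => exact hq x hx
  | zero => simp
  | add x y hx hy ihx ihy =>
      rw [pg_qadd q x y, ihx, ihy, pg_span_iso q hb x hx y hy]
      ring
  | smul a x hx ih => rw [pg_qsmul, ih]; ring

section FinDim

variable [FiniteDimensional F V]

/-- rank–nullity for the image of a submodule -/
lemma pg_map_rank (W : Submodule F V) (φ : V →ₗ[F] V) :
    finrank F (W.map φ) + finrank F (LinearMap.ker (φ ∘ₗ W.subtype)) = finrank F W := by
  have h : W.map φ = LinearMap.range (φ ∘ₗ W.subtype) := by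
    rw [LinearMap.range_comp, Submodule.range_subtype]
  rw [h]
  exact LinearMap.finrank_range_add_finrank_ker _

lemma pg_span_singleton_le (s : V) : finrank F (Submodule.span F {s}) ≤ 1 := by
  rcases eq_or_ne s 0 with h | h
  · rw [h, Submodule.span_zero_singleton]
    simp
  · rw [finrank_span_singleton h]

lemma pg_sub_line {W : Submodule F V} {p : Submodule F W} {s : V}
    (h : ∀ u : W, u ∈ p → (u : V) ∈ Submodule.span F {s}) : finrank F p ≤ 1 := by
  have h1 : p.map W.subtype ≤ Submodule.span F {s} := by
    rintro _ ⟨u, hu, rfl⟩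
    exact h u hu
  calc finrank F p = finrank F (p.map W.subtype) :=
        (Submodule.finrank_map_subtype_eq W p).symm
    _ ≤ finrank F (Submodule.span F {s}) := Submodule.finrank_mono h1
    _ ≤ 1 := pg_span_singleton_le s

lemma pg_ker_functional (W : Submodule F V) (f : V →ₗ[F] F) :
    finrank F W ≤ finrank F (W ⊓ LinearMap.ker f : Submodule F V) + 1 := by
  have h1 : finrank F (LinearMap.range (f ∘ₗ W.subtype)) +
      finrank F (LinearMap.ker (f ∘ₗ W.subtype)) = finrank F W :=
    LinearMap.finrank_range_add_finrank_ker _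
  have h2 : LinearMap.ker (f ∘ₗ W.subtype) = Submodule.comap W.subtype (LinearMap.ker f) :=
    LinearMap.ker_comp _ _
  have h3 : finrank F (Submodule.comap W.subtype (LinearMap.ker f)) =
      finrank F (W ⊓ LinearMap.ker f : Submodule F V) := by
    rw [← Submodule.map_comap_subtype]
    exact (Submodule.finrank_map_subtype_eq W _).symm
  have h4 : finrank F (LinearMap.range (f ∘ₗ W.subtype)) ≤ 1 := by
    calc finrank F (LinearMap.range (f ∘ₗ W.subtype)) ≤ finrank F F :=
          (LinearMap.range (f ∘ₗ W.subtype)).finrank_le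
      _ = 1 := finrank_self F
  rw [h2] at h1
  rw [h3] at h1
  omega

lemma pg_qadd_smul (x y : V) (c : F) :
    q (x + c • y) = q x + c * c * q y + c * polarBilin q x y := by
  have h1 : polarBilin q x (c • y) = c * polarBilin q x y := by
    rw [LinearMap.map_smul, smul_eq_mul]
  rw [pg_qadd, pg_qsmul, h1]

lemma pg_keyA1_base
    (hnd : ∀ v : V, (∀ w, polarBilin q v w = 0) → v = 0)
    (H S : Submodule F V)
    (hSsing : ∀ x ∈ S, q x = 0)
    (hlt : finrank F H < finrank F S)
    (hbase : ∀ s ∈ H, q s = 0 → s = 0) :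
    ∃ e : V, q e = 0 ∧ (∀ h ∈ H, polarBilin q e h = 0) ∧ e ∉ H ∧
      (∀ y : V, (∀ u ∈ S, polarBilin q u y = 0) → (∀ u ∈ H, polarBilin q u y = 0) →
        polarBilin q e y = 0) := by
  have hrefl : (polarBilin q).IsRefl := fun x y hxy => by rw [pg_bsymm]; exact hxy
  set O := LinearMap.BilinForm.orthogonal (polarBilin q) H with hO
  have hOr : finrank F O = finrank F V - finrank F H :=
    LinearMap.BilinForm.finrank_orthogonal (⟨hnd, fun y hy => hnd y (fun w => by rw [pg_bsymm]; exact hy w)⟩ : (polarBilin q).Nondegenerate) H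
  have hsup : finrank F (S ⊔ O : Submodule F V) + finrank F (S ⊓ O : Submodule F V)
      = finrank F S + finrank F O := Submodule.finrank_sup_add_finrank_inf_eq S O
  have hle1 : finrank F (S ⊔ O : Submodule F V) ≤ finrank F V := Submodule.finrank_le _
  have hle2 : finrank F H ≤ finrank F V := Submodule.finrank_le _
  have hle3 : finrank F S ≤ finrank F V := Submodule.finrank_le _
  have hpos : 0 < finrank F (S ⊓ O : Submodule F V) := by omega
  obtain ⟨⟨e, heSO⟩, he0⟩ := Module.finrank_pos_iff_exists_ne_zero.mp hpos
  have he0' : e ≠ 0 := fun hc => he0 (Subtype.ext hc)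
  obtain ⟨heS, heO⟩ := heSO
  refine ⟨e, hSsing e heS, ?_, ?_, ?_⟩
  · intro h hh
    rw [pg_bsymm]
    exact (LinearMap.BilinForm.mem_orthogonal_iff.mp heO) h hh
  · intro heH
    exact he0' (hbase e heH (hSsing e heS))
  · intro y hyS _
    exact hyS e heS

lemma pg_keyA1 (h2 : (2 : F) = 0)
    (hnd : ∀ v : V, (∀ w, polarBilin q v w = 0) → v = 0) :
    ∀ (d : ℕ) (H S : Submodule F V),
      (∀ x ∈ H, ∀ y ∈ H, polarBilin q x y = 0) →
      (∀ x ∈ S, q x = 0) →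
      finrank F H ≤ d → finrank F H < finrank F S →
      ∃ e : V, q e = 0 ∧ (∀ h ∈ H, polarBilin q e h = 0) ∧ e ∉ H ∧
        (∀ y : V, (∀ u ∈ S, polarBilin q u y = 0) → (∀ u ∈ H, polarBilin q u y = 0) →
          polarBilin q e y = 0) := by
  intro d
  induction d with
  | zero =>
      intro H S hHiso hSsing hle hlt
      refine pg_keyA1_base q hnd H S hSsing hlt ?_
      intro s hs _
      have hHbot : H = ⊥ := Submodule.finrank_eq_zero.mp (Nat.le_zero.mp hle)
      rw [hHbot] at hs
      simpa using hs
  | succ d ih =>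
      intro H S hHiso hSsing hle hlt
      by_cases hbase : ∀ s ∈ H, q s = 0 → s = 0
      · exact pg_keyA1_base q hnd H S hSsing hlt hbase
      push_neg at hbase
      obtain ⟨s, hsH, hqs, hs0⟩ := hbase
      have hSiso : ∀ x ∈ S, ∀ y ∈ S, polarBilin q x y = 0 := pg_sing_iso q hSsing
      -- construct the singular partner t of s
      have hT : ∃ t : V, q t = 0 ∧ polarBilin q s t = 1 ∧
          ((∀ v ∈ S, polarBilin q s v = 0) ∨ (t ∈ S ∧ s ∉ S)) := by
        by_cases hts : ∀ v ∈ S, polarBilin q s v = 0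
        · obtain ⟨w, hw⟩ : ∃ w, polarBilin q s w ≠ 0 := by
            by_contra hcon; push_neg at hcon; exact hs0 (hnd s hcon)
          set z := (polarBilin q s w)⁻¹ • w with hz
          have hsz : polarBilin q s z = 1 := by
            rw [hz, LinearMap.map_smul, smul_eq_mul, inv_mul_cancel₀ hw]
          refine ⟨z + q z • s, ?_, ?_, Or.inl hts⟩
          · rw [pg_qadd_smul, hqs, pg_bsymm q z s, hsz]
            have := pg_two h2 (q z)
            linear_combination this
          · rw [pg_expandR, hsz, pg_bself q h2]
            ring
        · push_neg at hts
          obtain ⟨v, hvS, hv⟩ := hts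
          refine ⟨(polarBilin q s v)⁻¹ • v, ?_, ?_, Or.inr ⟨Submodule.smul_mem _ _ hvS, ?_⟩⟩
          · rw [pg_qsmul, hSsing v hvS]; ring
          · rw [LinearMap.map_smul, smul_eq_mul, inv_mul_cancel₀ hv]
          · intro hsS
            exact hv (hSiso s hsS v hvS)
      obtain ⟨t, hqt, hst, hcase⟩ := hT
      -- the projection map
      set σ : V →ₗ[F] V := LinearMap.id + ((polarBilin q).flip t).smulRight s with hσdef
      have hσ_apply : ∀ v : V, σ v = v + polarBilin q v t • s := by
        intro v
        simp [hσdef, LinearMap.add_apply, LinearMap.smulRight_apply, LinearMap.flip_apply]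
      have hss0 : s + s = (0 : V) := by rw [← two_smul F s, h2, zero_smul]
      have hσs : σ s = 0 := by
        rw [hσ_apply, hst, one_smul, hss0]
      set H1 := H.map σ with hH1def
      set U := S ⊓ LinearMap.ker (polarBilin q s) with hUdef
      set S1 := U.map σ with hS1def
      have hkey : ∀ v : V, polarBilin q s v = 0 →
          polarBilin q (σ v) s = 0 ∧ polarBilin q (σ v) t = 0 := by
        intro v hv
        constructor
        · rw [hσ_apply, pg_expandL, pg_bself q h2, pg_bsymm q v s, hv]; ring
        · rw [hσ_apply, pg_expandL, hst, mul_one]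
          exact pg_two h2 _
      have hH1iso : ∀ x ∈ H1, ∀ y ∈ H1, polarBilin q x y = 0 := by
        rintro x hx y hy
        obtain ⟨a, haH, rfl⟩ := hx
        obtain ⟨b, hbH, rfl⟩ := hy
        rw [hσ_apply a, hσ_apply b, pg_expandL, pg_expandR, pg_expandR,
          hHiso a haH b hbH, hHiso a haH s hsH, hHiso s hsH b hbH, pg_bself q h2]
        ring
      have hS1sing : ∀ x ∈ S1, q x = 0 := by
        intro x hx
        obtain ⟨v, hvU, rfl⟩ := Submodule.mem_map.mp hx
        have hvS : v ∈ S := hvU.1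
        have hvk : polarBilin q s v = 0 := LinearMap.mem_ker.mp hvU.2
        rw [hσ_apply, pg_qadd_smul, hSsing v hvS, hqs, pg_bsymm q v s, hvk]
        ring
      -- dimension of H1
      have hrnH := pg_map_rank H σ
      rw [← hH1def] at hrnH
      have hkerH : 0 < finrank F (LinearMap.ker (σ ∘ₗ H.subtype)) := by
        rw [Module.finrank_pos_iff_exists_ne_zero]
        refine ⟨⟨⟨s, hsH⟩, ?_⟩, ?_⟩
        · rw [LinearMap.mem_ker]
          simpa using hσs
        · intro hc
          apply hs0
          have := congrArg (fun (x : LinearMap.ker (σ ∘ₗ H.subtype)) => ((x : H) : V)) hc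
          simpa using this
      have hfH1 : finrank F H1 + 1 ≤ finrank F H := by omega
      -- dimension of S1
      have hfS1 : finrank F S ≤ finrank F S1 + 1 := by
        have hrnU := pg_map_rank U σ
        rw [← hS1def] at hrnU
        rcases hcase with hts | ⟨htS, hsS⟩
        · have hUeq : U = S := by
            rw [hUdef]
            refine le_antisymm inf_le_left (le_inf le_rfl ?_)
            intro v hv
            exact LinearMap.mem_ker.mpr (hts v hv)
          have hker1 : finrank F (LinearMap.ker (σ ∘ₗ U.subtype)) ≤ 1 := by
            refine pg_sub_line (s := s) ?_
            intro u hu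
            have h0 : σ (u : V) = 0 := by
              have := LinearMap.mem_ker.mp hu
              simpa using this
            rw [hσ_apply] at h0
            have : (u : V) = -(polarBilin q (u : V) t) • s := by
              rw [neg_smul]
              exact eq_neg_of_add_eq_zero_left h0
            rw [this]
            exact Submodule.smul_mem _ _ (Submodule.mem_span_singleton_self s)
          have hUS : finrank F U = finrank F S := by rw [hUeq]
          omega
        · have hUge := pg_ker_functional S (polarBilin q s)
          have hker0 : finrank F (LinearMap.ker (σ ∘ₗ U.subtype)) = 0 := by
            rw [Submodule.finrank_eq_zero]
            rw [eq_bot_iff]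
            rintro ⟨u, huU⟩ hu
            have h0 : σ u = 0 := by
              have := LinearMap.mem_ker.mp hu
              simpa using this
            rw [hσ_apply] at h0
            have hexp : u = -(polarBilin q u t) • s := by
              rw [neg_smul]
              exact eq_neg_of_add_eq_zero_left h0
            have huS : u ∈ S := huU.1
            have hc0 : -(polarBilin q u t) = 0 := by
              by_contra hc
              apply hsS
              have h5 := congrArg (fun w => (-(polarBilin q u t))⁻¹ • w) hexp
              simp only [smul_smul, inv_mul_cancel₀ hc, one_smul] at h5
              rw [← h5]
              exact Submodule.smul_mem _ _ huS
            have hu0 : u = 0 := by rw [hexp, hc0, zero_smul]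
            simp [hu0]
          rw [← hUdef] at hUge
          omega
      -- apply the induction hypothesis
      obtain ⟨e, hqe, heH1, heN1, hy1⟩ := ih H1 S1 hH1iso hS1sing (by omega) (by omega)
      have hes : polarBilin q e s = 0 := by
        apply hy1 s
        · intro u hu
          obtain ⟨v, hvU, rfl⟩ := Submodule.mem_map.mp hu
          exact (hkey v (LinearMap.mem_ker.mp hvU.2)).1
        · intro u hu
          obtain ⟨h, hhH, rfl⟩ := Submodule.mem_map.mp hu
          exact (hkey h (hHiso s hsH h hhH)).1
      have het : polarBilin q e t = 0 := by
        apply hy1 t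
        · intro u hu
          obtain ⟨v, hvU, rfl⟩ := Submodule.mem_map.mp hu
          exact (hkey v (LinearMap.mem_ker.mp hvU.2)).2
        · intro u hu
          obtain ⟨h, hhH, rfl⟩ := Submodule.mem_map.mp hu
          exact (hkey h (hHiso s hsH h hhH)).2
      refine ⟨e, hqe, ?_, ?_, ?_⟩
      · intro h hh
        have hσh : σ h ∈ H1 := Submodule.mem_map_of_mem hh
        have hdecomp : h = σ h + (-(polarBilin q h t)) • s := by
          rw [hσ_apply, neg_smul]
          abel
        calc polarBilin q e h
            = polarBilin q e (σ h) + (-(polarBilin q h t)) * polarBilin q e s := by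
              rw [← pg_expandR, ← hdecomp]
          _ = 0 := by rw [heH1 (σ h) hσh, hes]; ring
      · intro heH
        have hσe : σ e = e := by
          rw [hσ_apply, het, zero_smul, add_zero]
        exact heN1 (hσe ▸ Submodule.mem_map_of_mem heH)
      · intro y hyS hyH
        apply hy1 y
        · intro u hu
          obtain ⟨v, hvU, rfl⟩ := Submodule.mem_map.mp hu
          rw [hσ_apply, pg_expandL, hyS v hvU.1, hyH s hsH]
          ring
        · intro u hu
          obtain ⟨h, hhH, rfl⟩ := Submodule.mem_map.mp hu
          rw [hσ_apply, pg_expandL, hyH h hhH, hyH s hsH]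
          ring

end FinDim

end PolarGrassAux

section PolarGrassAux2

open Module QuadraticMap Submodule PolarGrass

variable {F : Type*} [Field F] {V : Type*} [AddCommGroup V] [Module F V]
variable (q : QuadraticForm F V)

lemma pg_bsmulL (c : F) (a b : V) : polarBilin q (c • a) b = c * polarBilin q a b := by
  rw [_root_.map_smul, LinearMap.smul_apply, smul_eq_mul]

lemma pg_baddL (a b c : V) : polarBilin q (a + b) c = polarBilin q a c + polarBilin q b c := by
  rw [_root_.map_add, LinearMap.add_apply]

lemma pg_li_update {k : ℕ} {v : Fin k → V} (hv : LinearIndependent F v)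
    (i : Fin k) (w : V) (φ : V →ₗ[F] F) (hφw : φ w ≠ 0) (hφv : ∀ j, j ≠ i → φ (v j) = 0) :
    LinearIndependent F (Function.update v i w) := by
  rw [Fintype.linearIndependent_iff] at hv ⊢
  intro g hg
  have hgi : g i = 0 := by
    have h0 := congrArg φ hg
    rw [map_sum, map_zero] at h0
    have hsum : ∑ j, φ (g j • Function.update v i w j) = g i * φ w := by
      rw [Finset.sum_eq_single i]
      · rw [Function.update_self, LinearMap.map_smul, smul_eq_mul]
      · intro j _ hj
        rw [Function.update_of_ne hj, LinearMap.map_smul, smul_eq_mul, hφv j hj, mul_zero]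
      · intro h; exact absurd (Finset.mem_univ i) h
    rw [hsum] at h0
    exact (mul_eq_zero.mp h0).resolve_right hφw
  have hg' : ∑ j, g j • v j = 0 := by
    rw [← hg]
    apply Finset.sum_congr rfl
    intro j _
    rcases eq_or_ne j i with rfl | hj
    · rw [hgi, zero_smul, zero_smul]
    · rw [Function.update_of_ne hj]
  intro j
  rcases eq_or_ne j i with rfl | hj
  · exact hgi
  · exact hv g hg' j

variable [FiniteDimensional F V]

lemma pg_keyA (h2 : (2 : F) = 0)
    (hnd : ∀ v : V, (∀ w, polarBilin q v w = 0) → v = 0)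
    (H S : Submodule F V)
    (hHiso : ∀ x ∈ H, ∀ y ∈ H, polarBilin q x y = 0)
    (hSsing : ∀ x ∈ S, q x = 0)
    (hlt : finrank F H < finrank F S)
    (x : V) (hxH : x ∉ H) (hxperp : ∀ h ∈ H, polarBilin q x h = 0) :
    ∃ e : V, q e = 0 ∧ (∀ h ∈ H, polarBilin q e h = 0) ∧ polarBilin q x e = q x := by
  have hrefl : (polarBilin q).IsRefl := fun a b hab => by rw [pg_bsymm]; exact hab
  by_cases hex : ∃ e', q e' = 0 ∧ (∀ h ∈ H, polarBilin q e' h = 0) ∧ polarBilin q x e' ≠ 0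
  · obtain ⟨e', h1, h2', h3⟩ := hex
    refine ⟨(q x / polarBilin q x e') • e', ?_, ?_, ?_⟩
    · rw [pg_qsmul, h1]; ring
    · intro h hh
      rw [pg_bsmulL, h2' h hh, mul_zero]
    · rw [LinearMap.map_smul, smul_eq_mul, div_mul_cancel₀ _ h3]
  · exfalso
    push_neg at hex
    obtain ⟨e₁, hqe₁, he₁H, he₁nH, -⟩ :=
      pg_keyA1 q h2 hnd (finrank F H) H S hHiso hSsing le_rfl hlt
    have hxe₁ : polarBilin q x e₁ = 0 := hex e₁ hqe₁ he₁H
    have hOrth : ∀ v : V, v ∉ H →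
        ∃ u, (∀ h ∈ H, polarBilin q h u = 0) ∧ polarBilin q v u ≠ 0 := by
      intro v hv
      by_contra hcon
      push_neg at hcon
      apply hv
      have hvmem : v ∈ LinearMap.BilinForm.orthogonal (polarBilin q)
          (LinearMap.BilinForm.orthogonal (polarBilin q) H) := by
        rw [LinearMap.BilinForm.mem_orthogonal_iff]
        intro u hu
        have hu' : ∀ h ∈ H, polarBilin q h u = 0 := fun h hh =>
          (LinearMap.BilinForm.mem_orthogonal_iff.mp hu) h hh
        have h5 := hcon u hu'
        show polarBilin q u v = 0
        rw [pg_bsymm]; exact h5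
      rwa [LinearMap.BilinForm.orthogonal_orthogonal (⟨hnd, fun y hy => hnd y (fun w => by rw [pg_bsymm]; exact hy w)⟩ : (polarBilin q).Nondegenerate) hrefl] at hvmem
    obtain ⟨u, huH, hxu⟩ := hOrth x hxH
    obtain ⟨w, hwH, hew⟩ := hOrth e₁ he₁nH
    obtain ⟨u', hu'H, hxu', heu'⟩ :
        ∃ u', (∀ h ∈ H, polarBilin q h u' = 0) ∧ polarBilin q x u' ≠ 0 ∧
          polarBilin q e₁ u' ≠ 0 := by
      by_cases hcs1 : polarBilin q e₁ u ≠ 0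
      · exact ⟨u, huH, hxu, hcs1⟩
      push_neg at hcs1
      by_cases hcs2 : polarBilin q x w ≠ 0
      · exact ⟨w, hwH, hcs2, hew⟩
      push_neg at hcs2
      refine ⟨u + w, ?_, ?_, ?_⟩
      · intro h hh
        rw [map_add, huH h hh, hwH h hh, add_zero]
      · rw [map_add, hcs2, add_zero]; exact hxu
      · rw [map_add, hcs1, zero_add]; exact hew
    set c := q u' / polarBilin q e₁ u' with hc
    have hkc : c * polarBilin q e₁ u' = q u' := by
      rw [hc, div_mul_cancel₀ _ heu']
    have hq0 : q (u' + c • e₁) = 0 := by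
      rw [pg_qadd_smul, hqe₁, pg_bsymm q u' e₁, hkc]
      linear_combination pg_two h2 (q u')
    have hperp : ∀ h ∈ H, polarBilin q (u' + c • e₁) h = 0 := by
      intro h hh
      rw [pg_baddL, pg_bsmulL, pg_bsymm q u' h, hu'H h hh, he₁H h hh]
      ring
    have hfinal := hex (u' + c • e₁) hq0 hperp
    rw [pg_expandR, hxe₁, mul_zero, add_zero] at hfinal
    exact hxu' hfinal

open Classical in
lemma pg_keyM (h2 : (2 : F) = 0)
    (hnd : ∀ v : V, (∀ w, polarBilin q v w = 0) → v = 0)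
    (S : Submodule F V) (hSsing : ∀ x ∈ S, q x = 0) :
    ∀ (r k : ℕ) (v : Fin k → V), k ≤ finrank F S → LinearIndependent F v →
      (∀ a b : Fin k, polarBilin q (v a) (v b) = 0) →
      (Finset.univ.filter fun t => q (v t) ≠ 0).card ≤ r →
      ExteriorAlgebra.ιMulti F k v ∈ grassmann F V (TotSingQ F V q) k := by
  intro r
  induction r with
  | zero =>
      intro k v hk hli hiso hcard
      have hall : ∀ t, q (v t) = 0 := by
        intro t
        by_contra ht
        have hmem : t ∈ Finset.univ.filter fun t => q (v t) ≠ 0 :=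
          Finset.mem_filter.mpr ⟨Finset.mem_univ t, ht⟩
        have := Finset.card_pos.mpr ⟨t, hmem⟩
        omega
      apply Submodule.subset_span
      refine ⟨v, fun t => Submodule.mem_top, hli, ?_, rfl⟩
      intro xx hx
      refine pg_span_sing q h2 ?_ ?_ xx hx
      · rintro y ⟨t, rfl⟩; exact hall t
      · rintro y ⟨a, rfl⟩ z ⟨b, rfl⟩; exact hiso a b
  | succ r ih =>
      intro k v hk hli hiso hcard
      by_cases hc : (Finset.univ.filter fun t => q (v t) ≠ 0).card ≤ r
      · exact ih k v hk hli hiso hc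
      have hne : (Finset.univ.filter fun t => q (v t) ≠ 0).Nonempty := by
        rw [Finset.nonempty_iff_ne_empty]
        intro hemp
        rw [hemp] at hc
        simp at hc
      obtain ⟨i, hi⟩ := hne
      have hqvi : q (v i) ≠ 0 := (Finset.mem_filter.mp hi).2
      have hkpos : 0 < k := i.pos
      set x := v i with hxdef
      set H := Submodule.span F (v '' ({i}ᶜ : Set (Fin k))) with hHdef
      have hgen : ∀ j, j ≠ i → v j ∈ H := by
        intro j hj
        exact Submodule.subset_span ⟨j, by simp [hj], rfl⟩
      have hxnotH : x ∉ H := hli.notMem_span_image (by simp)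
      have hHiso : ∀ a ∈ H, ∀ b ∈ H, polarBilin q a b = 0 := by
        apply pg_span_iso
        rintro a ⟨a', _, rfl⟩ b ⟨b', _, rfl⟩
        exact hiso a' b'
      have hxperp : ∀ h ∈ H, polarBilin q x h = 0 := by
        apply pg_span_perp
        rintro a ⟨a', _, rfl⟩
        exact hiso i a'
      have hHfr : finrank F H < finrank F S := by
        have himg : v '' ({i}ᶜ : Set (Fin k)) =
            Set.range (fun j : ({i}ᶜ : Set (Fin k)) => v j) := Set.image_eq_range _ _
        have hlicomp : LinearIndependent F (fun j : ({i}ᶜ : Set (Fin k)) => v j) :=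
          hli.comp _ Subtype.val_injective
        have hfr : finrank F H = Fintype.card ({i}ᶜ : Set (Fin k)) := by
          rw [hHdef, himg, finrank_span_eq_card hlicomp]
        have hcc : Fintype.card ({i}ᶜ : Set (Fin k)) = k - 1 := by
          rw [Fintype.card_compl_set]
          simp
        omega
      obtain ⟨e, hqe, heH, hxe⟩ :=
        pg_keyA q h2 hnd H S hHiso hSsing hHfr x hxnotH hxperp
      have hxe0 : polarBilin q x e ≠ 0 := by rw [hxe]; exact hqvi
      have heperp : ∀ j, j ≠ i → polarBilin q e (v j) = 0 := fun j hj =>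
        heH (v j) (hgen j hj)
      have hee : e + e = (0 : V) := by rw [← two_smul F e, h2, zero_smul]
      have hqxe : q (x + e) = 0 := by
        rw [pg_qadd, hqe, hxe]
        linear_combination pg_two h2 (q x)
      -- both replacement tuples lie in the Grassmann image
      have hstep : ∀ w : V, q w = 0 → (∀ j, j ≠ i → polarBilin q w (v j) = 0) →
          polarBilin q x w ≠ 0 →
          ExteriorAlgebra.ιMulti F k (Function.update v i w) ∈
            grassmann F V (TotSingQ F V q) k := by
        intro w hqw hwv hxw
        have hli' : LinearIndependent F (Function.update v i w) :=
          pg_li_update hli i w (polarBilin q x) hxw (fun j hj => hiso i j)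
        have hiso' : ∀ a b : Fin k,
            polarBilin q (Function.update v i w a) (Function.update v i w b) = 0 := by
          intro a b
          rcases eq_or_ne a i with ha | ha <;> rcases eq_or_ne b i with hb | hb
          · rw [ha, hb, Function.update_self]
            exact pg_bself q h2 w
          · rw [ha, Function.update_self, Function.update_of_ne hb]
            exact hwv b hb
          · rw [hb, Function.update_of_ne ha, Function.update_self, pg_bsymm]
            exact hwv a ha
          · rw [Function.update_of_ne ha, Function.update_of_ne hb]
            exact hiso a b
        have hcard' : (Finset.univ.filter fun t => q (Function.update v i w t) ≠ 0).card ≤ r := by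
          have hsub : (Finset.univ.filter fun t => q (Function.update v i w t) ≠ 0) ⊆
              (Finset.univ.filter fun t => q (v t) ≠ 0).erase i := by
            intro t ht
            have ht' := (Finset.mem_filter.mp ht).2
            rcases eq_or_ne t i with rfl | htne
            · rw [Function.update_self] at ht'
              exact absurd hqw ht'
            · rw [Function.update_of_ne htne] at ht'
              exact Finset.mem_erase.mpr ⟨htne,
                Finset.mem_filter.mpr ⟨Finset.mem_univ t, ht'⟩⟩
          have h6 := Finset.card_le_card hsub
          rw [Finset.card_erase_of_mem hi] at h6
          omega
        exact ih k (Function.update v i w) hk hli' hiso' hcard'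
      have hsplit : ExteriorAlgebra.ιMulti F k v =
          ExteriorAlgebra.ιMulti F k (Function.update v i (x + e)) +
          ExteriorAlgebra.ιMulti F k (Function.update v i e) := by
        have h1 : v = Function.update v i ((x + e) + e) := by
          rw [add_assoc, hee, add_zero, hxdef, Function.update_eq_self]
        conv_lhs => rw [h1]
        exact AlternatingMap.map_update_add _ _ _ _ _
      rw [hsplit]
      apply Submodule.add_mem
      · apply hstep (x + e) hqxe
        · intro j hj
          rw [pg_baddL, hiso i j, heperp j hj, add_zero]
        · rw [map_add, pg_bself q h2, zero_add]
          exact hxe0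
      · exact hstep e hqe heperp hxe0

end PolarGrassAux2
open PolarGrass Module in
/-- `char F = 2`, a non-degenerate quadratic form with Witt index `n ≥ 2`
and non-degenerate polarization `f_q` (so `N = 2n + 2m` and the anisotropic part has
dimension `2m`). For `1 ≤ k ≤ n` the Grassmann image coincides with the symplectic
Grassmann image of `f_q`. -/
theorem stmt17 (F : Type*) [Field F] (V : Type*) [AddCommGroup V] [Module F V]
    [FiniteDimensional F V]
    (hchar : ringChar F = 2)
    (q : QuadraticForm F V)
    (hndeg : ∀ v : V, q v = 0 → (∀ w : V, polarF F V q v w = 0) → v = 0)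
    (hfq : ∀ v : V, (∀ w : V, polarF F V q v w = 0) → v = 0)
    (n m : ℕ) (hn : 2 ≤ n)
    (hdec : HasWittDecomp F V (polarF F V q) (fun v => q v = 0) (radSetQ F V q) n (2 * m) 0)
    (hNV : Module.finrank F V = 2 * n + 2 * m) :
    ∀ k : ℕ, 1 ≤ k → k ≤ n →
      grassmann F V (TotSingQ F V q) k = grassmann F V (TotSingB F V (polarF F V q)) k := by
  classical
  have h2 : (2 : F) = 0 := by
    have hd : ringChar F ∣ 2 := by rw [hchar]
    have := (ringChar.spec F 2).mpr hd
    exact_mod_cast this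
  have hpol : ∀ x y : V, polarF F V q x y = QuadraticMap.polarBilin q x y := by
    intro x y
    rw [QuadraticMap.polarBilin_apply_apply]
    rfl
  have hnd : ∀ v : V, (∀ w, QuadraticMap.polarBilin q v w = 0) → v = 0 := by
    intro v hv
    exact hfq v (fun w => by rw [hpol]; exact hv w)
  -- extract a maximal totally singular subspace from the Witt decomposition
  obtain ⟨W, W₀, R, hInt, hOrth, hHyp, hW₀, hfrW₀, hRset, hfrR⟩ := hdec
  choose ee ff hWsp hqee hqff hBef using hHyp
  set S := Submodule.span F (Set.range ee) with hSdef
  have heW : ∀ i, ee i ∈ W i := by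
    intro i
    rw [hWsp i]
    exact Submodule.subset_span (by simp)
  have hee0 : ∀ i, ee i ≠ 0 := by
    intro i hc
    have hb := hBef i
    rw [hpol, hc] at hb
    simp at hb
  have hind : iSupIndep W := by
    have h := hInt.submodule_iSupIndep
    have h2' := h.comp (Sum.inl_injective (α := Fin n) (β := Fin 2))
    rwa [Sum.elim_comp_inl] at h2'
  have hliee : LinearIndependent F ee :=
    iSupIndep.linearIndependent W hind heW hee0
  have hfrS : finrank F S = n := by
    rw [hSdef, finrank_span_eq_card hliee, Fintype.card_fin]
  have hBee : ∀ i j, QuadraticMap.polarBilin q (ee i) (ee j) = 0 := by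
    intro i j
    rcases eq_or_ne i j with rfl | hij
    · exact pg_bself q h2 _
    · have hne : (Sum.inl i : Fin n ⊕ Fin 2) ≠ Sum.inl j := fun hc => hij (Sum.inl.inj hc)
      have := hOrth (Sum.inl i) (Sum.inl j) hne (ee i) (heW i) (ee j) (heW j)
      rwa [hpol] at this
  have hSsing : ∀ x ∈ S, q x = 0 := by
    rw [hSdef]
    apply pg_span_sing q h2
    · rintro y ⟨i, rfl⟩; exact hqee i
    · rintro y ⟨i, rfl⟩ z ⟨j, rfl⟩; exact hBee i j
  intro k hk1 hkn
  apply le_antisymm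
  · -- totally singular wedges are totally isotropic wedges
    apply Submodule.span_le.mpr
    rintro xx ⟨v, hvU, hli, hTS, rfl⟩
    apply Submodule.subset_span
    refine ⟨v, hvU, hli, ?_, rfl⟩
    intro a ha b hb
    rw [hpol]
    exact pg_sing_iso q hTS a ha b hb
  · -- the hard inclusion
    apply Submodule.span_le.mpr
    rintro xx ⟨v, hvU, hli, hTB, rfl⟩
    apply pg_keyM q h2 hnd S hSsing k k v
    · rw [hfrS]; exact hkn
    · exact hli
    · intro a b
      rw [← hpol]
      exact hTB (v a) (Submodule.subset_span ⟨a, rfl⟩) (v b) (Submodule.subset_span ⟨b, rfl⟩)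
    · calc (Finset.univ.filter fun t => q (v t) ≠ 0).card ≤ Finset.univ.card :=
            Finset.card_filter_le _ _
        _ = k := by simp
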